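/- Let X ∈ ℝ^{n×p} satisfy XᵀX = I_p, let f : ℝ^{n×p} → ℝ be differentiable, r : ℝ^{n×p} → ℝ be convex and Lipschitz, and η > 0. Suppose X is the global minimizer of D ↦ ⟨∇f(X), D⟩ + r(D) + (1/(2η))‖D - X‖_F² over the affine set {D : Φ(DᵀX) = Φ(XᵀX)}, where Φ(M) = (M+Mᵀ)/2. Then there exists W ∈ ∂r(X) such that ∇f(X) + W - X·Φ(Xᵀ(∇f(X) + W)) = 0, i.e., X is a first-order stationary point of minimizing f + r over the Stiefel manifold. -/

import Mathlib

open Matrix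
open scoped BigOperators
open scoped Pointwise

/-- Frobenius norm of a real matrix. -/
noncomputable def frobNorm {n p : ℕ} (A : Matrix (Fin n) (Fin p) ℝ) : ℝ :=
  Real.sqrt (∑ i, ∑ j, (A i j) ^ 2)

/-- Spectral (ℓ₂ operator) norm of a real matrix. -/
noncomputable def specNorm {n p : ℕ} (A : Matrix (Fin n) (Fin p) ℝ) : ℝ :=
  ‖LinearMap.toContinuousLinearMap (Matrix.toEuclideanLin A)‖

/-- Symmetrization operator Φ(M) = (M + Mᵀ)/2. -/
noncomputable def sym {p : ℕ} (M : Matrix (Fin p) (Fin p) ℝ) : Matrix (Fin p) (Fin p) ℝ :=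
  ((1 : ℝ) / 2) • (M + Mᵀ)

/-- Frobenius (trace) inner product ⟨A, B⟩ = tr(AᵀB). -/
noncomputable def minner {n p : ℕ} (A B : Matrix (Fin n) (Fin p) ℝ) : ℝ :=
  Matrix.trace (Aᵀ * B)

/-- Convex subdifferential of `r` at `X` with respect to the trace inner product. -/
def msubdiff {n p : ℕ} (r : Matrix (Fin n) (Fin p) ℝ → ℝ) (X : Matrix (Fin n) (Fin p) ℝ) :
    Set (Matrix (Fin n) (Fin p) ℝ) :=
  {W | ∀ Z, r X + minner W (Z - X) ≤ r Z}

attribute [local instance] Matrix.frobeniusSeminormedAddCommGroup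
  Matrix.frobeniusNormedAddCommGroup Matrix.frobeniusNormedSpace


variable {n p : ℕ}

lemma minner_expand (A B : Matrix (Fin n) (Fin p) ℝ) :
    minner A B = ∑ i, ∑ j, A i j * B i j := by
  rw [Finset.sum_comm]
  simp [minner, Matrix.trace, Matrix.mul_apply, Matrix.diag, Matrix.transpose_apply]

lemma minner_add_right (A B C : Matrix (Fin n) (Fin p) ℝ) :
    minner A (B + C) = minner A B + minner A C := by
  simp [minner_expand, mul_add, Finset.sum_add_distrib]

lemma minner_smul_right (c : ℝ) (A B : Matrix (Fin n) (Fin p) ℝ) :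
    minner A (c • B) = c * minner A B := by
  simp [minner_expand, Finset.mul_sum, mul_left_comm]

lemma minner_comm (A B : Matrix (Fin n) (Fin p) ℝ) : minner A B = minner B A := by
  simp [minner_expand, mul_comm]

lemma minner_add_left (A B C : Matrix (Fin n) (Fin p) ℝ) :
    minner (A + B) C = minner A C + minner B C := by
  rw [minner_comm, minner_add_right, minner_comm A, minner_comm B]

lemma minner_sub_left (A B C : Matrix (Fin n) (Fin p) ℝ) :
    minner (A - B) C = minner A C - minner B C := by
  simp [minner_expand, sub_mul, Finset.sum_sub_distrib]

lemma minner_self_nonneg (A : Matrix (Fin n) (Fin p) ℝ) : 0 ≤ minner A A := by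
  rw [minner_expand]
  exact Finset.sum_nonneg fun i _ => Finset.sum_nonneg fun j _ => mul_self_nonneg _

lemma eq_zero_of_minner_self (A : Matrix (Fin n) (Fin p) ℝ) (h : minner A A = 0) : A = 0 := by
  rw [minner_expand] at h
  ext i j
  have h1 := (Finset.sum_eq_zero_iff_of_nonneg
    (fun i _ => Finset.sum_nonneg fun j _ => mul_self_nonneg (A i j))).1 h i (Finset.mem_univ i)
  have h2 := (Finset.sum_eq_zero_iff_of_nonneg
    (fun j _ => mul_self_nonneg (A i j))).1 h1 j (Finset.mem_univ j)
  exact mul_self_eq_zero.1 h2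

lemma frobNorm_sq (A : Matrix (Fin n) (Fin p) ℝ) : frobNorm A ^ 2 = minner A A := by
  rw [frobNorm, Real.sq_sqrt (by positivity),
    minner_expand]
  simp [sq]

lemma sym_add {q : ℕ} (M N : Matrix (Fin q) (Fin q) ℝ) : sym (M + N) = sym M + sym N := by
  rw [sym, sym, sym, ← smul_add, transpose_add]
  congr 1; abel

lemma sym_sub {q : ℕ} (M N : Matrix (Fin q) (Fin q) ℝ) : sym (M - N) = sym M - sym N := by
  rw [sym, sym, sym, ← smul_sub, transpose_sub]
  congr 1; abel

lemma sym_smul {q : ℕ} (c : ℝ) (M : Matrix (Fin q) (Fin q) ℝ) : sym (c • M) = c • sym M := by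
  rw [sym, sym, transpose_smul, ← smul_add, smul_comm]

lemma sym_transpose {q : ℕ} (M : Matrix (Fin q) (Fin q) ℝ) : sym Mᵀ = sym M := by
  rw [sym, sym, transpose_transpose, add_comm]

lemma sym_transpose_eq {q : ℕ} (M : Matrix (Fin q) (Fin q) ℝ) : (sym M)ᵀ = sym M := by
  rw [sym, transpose_smul, transpose_add, transpose_transpose, add_comm]

lemma sym_sym {q : ℕ} (M : Matrix (Fin q) (Fin q) ℝ) : sym (sym M) = sym M := by
  rw [sym, sym_transpose_eq, ← two_smul ℝ (sym M), smul_smul]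
  norm_num



/-- difference quotient -/
noncomputable def dq {n p : ℕ} (r : Matrix (Fin n) (Fin p) ℝ → ℝ)
    (X H : Matrix (Fin n) (Fin p) ℝ) (t : ℝ) : ℝ :=
  (r (X + t • H) - r X) / t

noncomputable def dirD {n p : ℕ} (r : Matrix (Fin n) (Fin p) ℝ → ℝ)
    (X H : Matrix (Fin n) (Fin p) ℝ) : ℝ :=
  sInf ((dq r X H) '' Set.Ioi 0)

variable {n p : ℕ} {r : Matrix (Fin n) (Fin p) ℝ → ℝ} {X H K : Matrix (Fin n) (Fin p) ℝ}

lemma dq_mono (hrconv : ConvexOn ℝ Set.univ r) {s t : ℝ} (hs : 0 < s) (hst : s ≤ t) :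
    dq r X H s ≤ dq r X H t := by
  have ht : 0 < t := hs.trans_le hst
  have ha0 : (0:ℝ) ≤ s / t := (div_pos hs ht).le
  have hb0 : (0:ℝ) ≤ 1 - s / t := by
    have : s / t ≤ 1 := div_le_one_of_le₀ hst ht.le
    linarith
  have hc := hrconv.2 (Set.mem_univ (X + t • H)) (Set.mem_univ X) ha0 hb0 (by ring)
  have hpt : (s/t) • (X + t • H) + (1 - s/t) • X = X + s • H := by
    rw [smul_add, smul_smul, div_mul_cancel₀ s ht.ne']
    module
  rw [hpt, smul_eq_mul, smul_eq_mul] at hc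
  rw [dq, dq, div_le_div_iff₀ hs ht]
  have h3 := mul_le_mul_of_nonneg_right hc ht.le
  have h4 : (s / t * r (X + t • H) + (1 - s/t) * r X) * t
      = s * r (X + t • H) + (t - s) * r X := by
    field_simp
  rw [h4] at h3
  linarith

lemma dq_bdd {L : NNReal} (hL : LipschitzWith L r) {t : ℝ} (ht : 0 < t) :
    -((L : ℝ) * ‖H‖) ≤ dq r X H t := by
  have hd : |r (X + t • H) - r X| ≤ (L : ℝ) * (t * ‖H‖) := by
    have h := hL.dist_le_mul (X + t • H) X
    rw [Real.dist_eq, dist_eq_norm] at h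
    simpa [norm_smul, abs_of_pos ht, add_sub_cancel_left] using h
  have h2 := neg_le_of_abs_le hd
  rw [dq, le_div_iff₀ ht]
  nlinarith

lemma dirD_bddBelow {L : NNReal} (hL : LipschitzWith L r) :
    BddBelow ((dq r X H) '' Set.Ioi 0) := by
  refine ⟨-((L : ℝ) * ‖H‖), ?_⟩
  rintro y ⟨t, ht, rfl⟩
  exact dq_bdd hL (Set.mem_Ioi.1 ht)

lemma dirD_nonempty : ((dq r X H) '' Set.Ioi 0).Nonempty :=
  ⟨dq r X H 1, 1, Set.mem_Ioi.2 one_pos, rfl⟩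

lemma dirD_le_dq {L : NNReal} (hL : LipschitzWith L r) {t : ℝ} (ht : 0 < t) :
    dirD r X H ≤ dq r X H t :=
  csInf_le (dirD_bddBelow hL) ⟨t, Set.mem_Ioi.2 ht, rfl⟩

lemma le_dirD {a : ℝ} (h : ∀ t : ℝ, 0 < t → a ≤ dq r X H t) : a ≤ dirD r X H := by
  refine le_csInf dirD_nonempty ?_
  rintro y ⟨t, ht, rfl⟩
  exact h t (Set.mem_Ioi.1 ht)

lemma dq_midpoint (hrconv : ConvexOn ℝ Set.univ r) {t : ℝ} (ht : 0 < t) :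
    dq r X (H + K) t ≤ dq r X H (2*t) + dq r X K (2*t) := by
  have hc := hrconv.2 (Set.mem_univ (X + (2*t) • H)) (Set.mem_univ (X + (2*t) • K))
    (by norm_num : (0:ℝ) ≤ 1/2) (by norm_num : (0:ℝ) ≤ 1/2) (by norm_num)
  have hpt : (1/2 : ℝ) • (X + (2*t) • H) + (1/2 : ℝ) • (X + (2*t) • K) = X + t • (H + K) := by
    module
  rw [hpt, smul_eq_mul, smul_eq_mul] at hc
  rw [dq, dq, dq, ← add_div, div_le_div_iff₀ ht (by linarith)]
  linarith [mul_le_mul_of_nonneg_right hc ht.le]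

lemma dirD_add {L : NNReal} (hrconv : ConvexOn ℝ Set.univ r) (hL : LipschitzWith L r) :
    dirD r X (H + K) ≤ dirD r X H + dirD r X K := by
  refine le_of_forall_pos_le_add fun ε hε => ?_
  obtain ⟨y1, ⟨t1, ht1, rfl⟩, hy1⟩ := exists_lt_of_csInf_lt (dirD_nonempty (H := H))
    (lt_add_of_pos_right (dirD r X H) (half_pos hε))
  obtain ⟨y2, ⟨t2, ht2, rfl⟩, hy2⟩ := exists_lt_of_csInf_lt (dirD_nonempty (H := K))
    (lt_add_of_pos_right (dirD r X K) (half_pos hε))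
  rw [Set.mem_Ioi] at ht1 ht2
  have ht0 : 0 < min t1 t2 := lt_min ht1 ht2
  have h1 : dirD r X (H + K) ≤ dq r X (H + K) (min t1 t2 / 2) :=
    dirD_le_dq hL (by positivity)
  have h2 := dq_midpoint (H := H) (K := K) hrconv (X := X) (t := min t1 t2 / 2) (by positivity)
  rw [(by ring : 2 * (min t1 t2 / 2) = min t1 t2)] at h2
  have h3 : dq r X H (min t1 t2) ≤ dq r X H t1 := dq_mono hrconv ht0 (min_le_left _ _)
  have h4 : dq r X K (min t1 t2) ≤ dq r X K t2 := dq_mono hrconv ht0 (min_le_right _ _)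
  linarith

lemma dirD_smul {c : ℝ} (hc : 0 < c) : dirD r X (c • H) = c * dirD r X H := by
  have hset : (dq r X (c • H)) '' Set.Ioi 0 = c • ((dq r X H) '' Set.Ioi 0) := by
    ext y
    simp only [Set.mem_image, Set.mem_smul_set, Set.mem_Ioi]
    constructor
    · rintro ⟨t, ht, rfl⟩
      refine ⟨dq r X H (t*c), ⟨t*c, mul_pos ht hc, rfl⟩, ?_⟩
      rw [smul_eq_mul, dq, dq, smul_smul]
      rw [eq_div_iff ht.ne']
      field_simp
    · rintro ⟨y, ⟨t, ht, rfl⟩, rfl⟩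
      refine ⟨t / c, div_pos ht hc, ?_⟩
      rw [dq, dq, smul_smul, div_mul_cancel₀ _ hc.ne', smul_eq_mul]
      rw [div_eq_iff (by positivity : (t/c : ℝ) ≠ 0)]
      field_simp
  rw [dirD, dirD, hset, Real.sInf_smul_of_nonneg hc.le, smul_eq_mul]

theorem stmt_17 {n p : ℕ} (X : Matrix (Fin n) (Fin p) ℝ) (hXfeas : Xᵀ * X = 1)
    (f r : Matrix (Fin n) (Fin p) ℝ → ℝ)
    (hf : Differentiable ℝ f)
    (G : Matrix (Fin n) (Fin p) ℝ)
    (hG : ∀ H : Matrix (Fin n) (Fin p) ℝ, fderiv ℝ f X H = minner G H)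
    (hrconv : ConvexOn ℝ Set.univ r)
    (hrlip : ∃ L : NNReal, LipschitzWith L r)
    (η : ℝ) (hη : 0 < η)
    (hmin : ∀ D : Matrix (Fin n) (Fin p) ℝ, sym (Dᵀ * X) = sym (Xᵀ * X) →
      minner G X + r X + (1 / (2 * η)) * frobNorm (X - X) ^ 2 ≤
        minner G D + r D + (1 / (2 * η)) * frobNorm (D - X) ^ 2) :
    ∃ W ∈ msubdiff r X, G + W - X * sym (Xᵀ * (G + W)) = 0 := by
  classical
  obtain ⟨L, hL⟩ := hrlip
  -- Step 1: consequence of minimality along feasible directions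
  have key : ∀ H : Matrix (Fin n) (Fin p) ℝ, sym (Hᵀ * X) = 0 → ∀ t : ℝ, 0 < t →
      r X - t * minner G H - (1 / (2 * η)) * (t ^ 2 * minner H H) ≤ r (X + t • H) := by
    intro H hH t ht
    have hfeas : sym ((X + t • H)ᵀ * X) = sym (Xᵀ * X) := by
      rw [transpose_add, transpose_smul, Matrix.add_mul, Matrix.smul_mul, sym_add, sym_smul, hH,
        smul_zero, add_zero]
    have h := hmin (X + t • H) hfeas
    have e1 : minner G (X + t • H) = minner G X + t * minner G H := by
      rw [minner_add_right, minner_smul_right]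
    have e2 : X + t • H - X = t • H := by abel
    have e3 : frobNorm (X + t • H - X) ^ 2 = t ^ 2 * minner H H := by
      rw [e2, frobNorm_sq, minner_smul_right, minner_comm, minner_smul_right]; ring
    have e4 : frobNorm (X - X) = 0 := by simp [frobNorm]
    rw [e1, e3, e4] at h
    nlinarith [h]
  -- Step 2: lower bound for the directional derivative on the tangent space
  have lower : ∀ H : Matrix (Fin n) (Fin p) ℝ, sym (Hᵀ * X) = 0 →
      -minner G H ≤ dirD r X H := by
    intro H hH
    refine le_dirD fun t ht => ?_
    refine le_of_forall_pos_le_add fun ε hε => ?_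
    have hm0 : 0 ≤ minner H H := minner_self_nonneg H
    have hc0 : 0 ≤ (1 / (2 * η)) * minner H H := by positivity
    set c : ℝ := (1 / (2 * η)) * minner H H with hcdef
    set s : ℝ := min t (ε / (c + 1)) with hsdef
    have hs0 : 0 < s := lt_min ht (div_pos hε (by linarith))
    have h1 := key H hH s hs0
    have hsc : s * c ≤ ε := by
      have h3 : s ≤ ε / (c + 1) := min_le_right _ _
      have h5 := mul_le_mul_of_nonneg_right h3 hc0
      have h6 : ε / (c + 1) * c ≤ ε := by
        rw [div_mul_eq_mul_div, div_le_iff₀ (by linarith)]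
        nlinarith
      linarith
    have h2 : -minner G H - ε ≤ dq r X H s := by
      rw [dq, le_div_iff₀ hs0]
      have h4 : s * (s * c) ≤ s * ε := mul_le_mul_of_nonneg_left hsc hs0.le
      rw [hcdef] at h4
      nlinarith [h1, h4]
    have h7 : dq r X H s ≤ dq r X H t := dq_mono hrconv hs0 (min_le_left _ _)
    linarith
  -- The tangent subspace
  let V : Submodule ℝ (Matrix (Fin n) (Fin p) ℝ) :=
    { carrier := {H | sym (Hᵀ * X) = 0}
      add_mem' := fun {a b} ha hb => by
        simp only [Set.mem_setOf_eq] at *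
        rw [transpose_add, Matrix.add_mul, sym_add, ha, hb, add_zero]
      zero_mem' := by simp [Set.mem_setOf_eq, sym]
      smul_mem' := fun c {a} ha => by
        simp only [Set.mem_setOf_eq] at *
        rw [transpose_smul, Matrix.smul_mul, sym_smul, ha, smul_zero] }
  let ℓ : V →ₗ[ℝ] ℝ :=
    { toFun := fun H => -minner G H.1
      map_add' := fun a b => by
        simp only [Submodule.coe_add, minner_add_right]; ring
      map_smul' := fun c a => by
        simp only [Submodule.coe_smul, minner_smul_right, RingHom.id_apply, smul_eq_mul]; ring }
  obtain ⟨g, hg1, hg2⟩ := exists_extension_of_le_sublinear ⟨V, ℓ⟩ (dirD r X)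
    (fun c hc H => dirD_smul hc) (fun H K => dirD_add hrconv hL)
    (fun x => by
      have hx : sym ((x : Matrix (Fin n) (Fin p) ℝ)ᵀ * X) = 0 := x.2
      exact lower _ hx)
  -- realize g as a matrix W
  set W : Matrix (Fin n) (Fin p) ℝ := Matrix.of fun i j => g (Matrix.single i j 1) with hWdef
  have hgW : ∀ H : Matrix (Fin n) (Fin p) ℝ, minner W H = g H := by
    intro H
    conv_rhs => rw [matrix_eq_sum_single H]
    rw [map_sum, minner_expand]
    refine Finset.sum_congr rfl fun i _ => ?_
    rw [map_sum]
    refine Finset.sum_congr rfl fun j _ => ?_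
    have hb : Matrix.single i j (H i j) = (H i j) • Matrix.single i j (1:ℝ) := by
      rw [Matrix.smul_single, smul_eq_mul, _root_.mul_one]
    rw [hb, _root_.map_smul, smul_eq_mul, mul_comm]
    rfl
  have hWsub : W ∈ msubdiff r X := by
    intro Z
    have h1 : minner W (Z - X) = g (Z - X) := hgW _
    have h2 : g (Z - X) ≤ dirD r X (Z - X) := hg2 _
    have h3 : dirD r X (Z - X) ≤ dq r X (Z - X) 1 := dirD_le_dq hL one_pos
    have h4 : dq r X (Z - X) 1 = r Z - r X := by
      rw [dq, one_smul, add_sub_cancel, div_one]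
    linarith
  have horth : ∀ H : Matrix (Fin n) (Fin p) ℝ, sym (Hᵀ * X) = 0 → minner (G + W) H = 0 := by
    intro H hH
    have h5 : g H = -minner G H := hg1 ⟨H, hH⟩
    rw [minner_add_left, hgW, h5]
    ring
  refine ⟨W, hWsub, ?_⟩
  set A : Matrix (Fin n) (Fin p) ℝ := G + W with hA
  set S : Matrix (Fin p) (Fin p) ℝ := sym (Xᵀ * A) with hS
  have hSt : Sᵀ = S := sym_transpose_eq _
  have hRV : sym ((A - X * S)ᵀ * X) = 0 := by
    have h6 : sym (Aᵀ * X) = S := by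
      rw [hS, ← sym_transpose (Xᵀ * A), transpose_mul, transpose_transpose]
    have h7 : sym S = S := by rw [hS, sym_sym]
    rw [transpose_sub, Matrix.sub_mul, transpose_mul, Matrix.mul_assoc, hXfeas, Matrix.mul_one, hSt, sym_sub, h6, h7,
      sub_self]
  have h8 : minner A (A - X * S) = 0 := horth _ hRV
  have h9 : minner (X * S) (A - X * S) = 0 := by
    set R : Matrix (Fin n) (Fin p) ℝ := A - X * S with hR
    have h10 : Rᵀ * X + (Rᵀ * X)ᵀ = 0 := by
      have h11 := congrArg (fun M => (2:ℝ) • M) hRV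
      simpa [sym, smul_smul] using h11
    have hM : Xᵀ * R = -(Xᵀ * R)ᵀ := by
      have h12 : (Xᵀ * R)ᵀ = Rᵀ * X := by rw [transpose_mul, transpose_transpose]
      have h13 := eq_neg_of_add_eq_zero_right h10
      rw [h12, ← h13, transpose_mul, transpose_transpose]
    show Matrix.trace ((X * S)ᵀ * R) = 0
    rw [transpose_mul, Matrix.mul_assoc, hSt]
    have h13 : Matrix.trace (S * (Xᵀ * R)) = Matrix.trace (S * (Xᵀ * R)ᵀ) := by
      conv_lhs => rw [← Matrix.trace_transpose, transpose_mul, hSt, Matrix.trace_mul_comm]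
    have h15 : Matrix.trace (S * (Xᵀ * R)) = - Matrix.trace (S * (Xᵀ * R)ᵀ) := by
      conv_lhs => rw [hM]
      rw [Matrix.mul_neg, Matrix.trace_neg]
    linarith [h13, h15]
  have h14 : minner (A - X * S) (A - X * S) = 0 := by
    rw [minner_sub_left, h8, h9, sub_zero]
  exact eq_zero_of_minner_self _ h14
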